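/- Let A ⊆ L(ω₁) be nonstationary and ξ : A → L(ω₁) injective. Then ξ extends to a continuous map φ : K_S → K_S with φ(∞) = ∞ and φ(α) = ∞ for every limit ordinal α ∉ A. -/

import Mathlib

open Topology OnePoint

noncomputable def omega1 : Ordinal := (Cardinal.aleph 1).ord

def IsClubIn (C : Set Ordinal) : Prop :=
  C ⊆ Set.Iio omega1 ∧
  (∀ o, o < omega1 → o ≠ 0 → (∀ p < o, ∃ q ∈ C, p < q ∧ q < o) → o ∈ C) ∧
  (∀ o, o < omega1 → ∃ p ∈ C, o < p)

/-- The ordinals below `ω₁`. -/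
abbrev Om : Type _ := {o : Ordinal // o < omega1}

/-- A ladder system on `ω₁`: for each countable limit ordinal `α`, a strictly increasing
sequence of non-limit ordinals converging to `α`. -/
structure LadderSystem where
  s : Om → ℕ → Om
  strictMono : ∀ α : Om, Order.IsSuccLimit (α : Ordinal) → StrictMono fun n => (s α n : Ordinal)
  notLimit : ∀ α : Om, Order.IsSuccLimit (α : Ordinal) → ∀ n, ¬ Order.IsSuccLimit (s α n : Ordinal)
  lt_self : ∀ α : Om, Order.IsSuccLimit (α : Ordinal) → ∀ n, (s α n : Ordinal) < (α : Ordinal)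
  conv : ∀ α : Om, Order.IsSuccLimit (α : Ordinal) → ∀ β < (α : Ordinal), ∃ n, β < (s α n : Ordinal)

/-- The ladder system topology on `ω₁`: non-limit ordinals are isolated, and a set is a
neighborhood of a limit ordinal `α` iff it contains `α` and cofinitely many points of the
ladder `s_α`. -/
def ladderTop (S : LadderSystem) : TopologicalSpace Om where
  IsOpen U := ∀ α ∈ U, Order.IsSuccLimit (α : Ordinal) → {n | S.s α n ∉ U}.Finite
  isOpen_univ := by intro α _ _; simp
  isOpen_inter := by
    intro U V hU hV α hα hlim
    refine ((hU α hα.1 hlim).union (hV α hα.2 hlim)).subset ?_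
    intro n hn
    simp only [Set.mem_setOf_eq, Set.mem_inter_iff, Set.mem_union] at hn ⊢
    tauto
  isOpen_sUnion := by
    intro T hT α hα hlim
    obtain ⟨t, ht, hαt⟩ := hα
    exact (hT t ht α hαt hlim).subset fun n hn h => hn ⟨t, ht, h⟩

/-- The topology of the one-point compactification `K_S` of the ladder system space. -/
def ksTop (S : LadderSystem) : TopologicalSpace (OnePoint Om) :=
  @OnePoint.instTopologicalSpace Om (ladderTop S)

-- AUX: almost disjointness of ladders
lemma almost_disjoint (S : LadderSystem) {α β : Om} (hα : Order.IsSuccLimit (α : Ordinal))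
    (hβ : Order.IsSuccLimit (β : Ordinal)) (hne : α ≠ β) :
    {n | ∃ m, S.s β m = S.s α n}.Finite := by
  by_contra hfin
  have hinf : {n | ∃ m, S.s β m = S.s α n}.Infinite := hfin
  classical
  have hab : (α : Ordinal) ≤ (β : Ordinal) := by
    apply le_of_forall_lt
    intro p hp
    obtain ⟨n₁, hn₁⟩ := S.conv α hα p hp
    obtain ⟨n, hn, hgt⟩ := hinf.exists_gt n₁
    obtain ⟨m, hm⟩ := hn
    have h1 : (S.s α n₁ : Ordinal) ≤ (S.s α n : Ordinal) :=
      (S.strictMono α hα).monotone (le_of_lt hgt)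
    have h2 : (S.s α n : Ordinal) = (S.s β m : Ordinal) := by rw [hm]
    calc p < (S.s α n₁ : Ordinal) := hn₁
      _ ≤ (S.s α n : Ordinal) := h1
      _ = (S.s β m : Ordinal) := h2
      _ < β := S.lt_self β hβ m
  have hba : (β : Ordinal) ≤ (α : Ordinal) := by
    apply le_of_forall_lt
    intro p hp
    obtain ⟨m₁, hm₁⟩ := S.conv β hβ p hp
    -- choose matching m's
    set f : ℕ → ℕ := fun n => if h : ∃ m, S.s β m = S.s α n then h.choose else 0 with hf
    have hfspec : ∀ n ∈ {n | ∃ m, S.s β m = S.s α n}, S.s β (f n) = S.s α n := by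
      intro n hn
      have hn' : ∃ m, S.s β m = S.s α n := hn
      simp only [hf, dif_pos hn']
      exact hn'.choose_spec
    have hinj : Set.InjOn f {n | ∃ m, S.s β m = S.s α n} := by
      intro x hx y hy hxy
      have : (S.s α x : Ordinal) = (S.s α y : Ordinal) := by
        rw [← hfspec x hx, ← hfspec y hy, hxy]
      exact (S.strictMono α hα).injective this
    have himg : (f '' {n | ∃ m, S.s β m = S.s α n}).Infinite := hinf.image hinj
    obtain ⟨m, hmmem, hmgt⟩ := himg.exists_gt m₁
    obtain ⟨n, hn, rfl⟩ := hmmem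
    have h1 : (S.s β m₁ : Ordinal) ≤ (S.s β (f n) : Ordinal) :=
      (S.strictMono β hβ).monotone (le_of_lt hmgt)
    calc p < (S.s β m₁ : Ordinal) := hm₁
      _ ≤ (S.s β (f n) : Ordinal) := h1
      _ = (S.s α n : Ordinal) := by rw [hfspec n hn]
      _ < α := S.lt_self α hα n
  exact hne (Subtype.ext (le_antisymm hab hba))

-- AUX: compact sets have finitely many limit points
lemma compact_limits (S : LadderSystem) {K : Set Om}
    (hK : @IsCompact Om (ladderTop S) K) :
    {γ : Om | γ ∈ K ∧ Order.IsSuccLimit (γ : Ordinal)}.Finite := by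
  classical
  letI := ladderTop S
  set U : Om → Set Om := fun γ =>
    if Order.IsSuccLimit (γ : Ordinal) then insert γ (Set.range (S.s γ)) else {γ} with hU
  have hUopen : ∀ γ, IsOpen (U γ) := by
    intro γ
    show ∀ α ∈ U γ, Order.IsSuccLimit (α : Ordinal) → {n | S.s α n ∉ U γ}.Finite
    intro α hα hlim
    by_cases h : Order.IsSuccLimit (γ : Ordinal)
    · simp only [hU, if_pos h, Set.mem_insert_iff, Set.mem_range] at hα
      rcases hα with rfl | ⟨n, rfl⟩
      · have : {n | S.s α n ∉ U α} = ∅ := by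
          ext n
          simp only [hU, if_pos h, Set.mem_setOf_eq, Set.mem_insert_iff, Set.mem_range,
            Set.mem_empty_iff_false, iff_false, not_not, not_or, not_forall]
          intro hc
          exact hc.2 ⟨n, rfl⟩
        rw [this]; exact Set.finite_empty
      · exact absurd hlim (S.notLimit γ h n)
    · simp only [hU, if_neg h, Set.mem_singleton_iff] at hα
      subst hα
      exact absurd hlim h
  have hcover : K ⊆ ⋃ γ, U γ := by
    intro γ _
    apply Set.mem_iUnion.mpr
    refine ⟨γ, ?_⟩
    by_cases h : Order.IsSuccLimit (γ : Ordinal)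
    · simp [hU, if_pos h]
    · simp [hU, if_neg h]
  obtain ⟨t, ht⟩ := hK.elim_finite_subcover U hUopen hcover
  refine t.finite_toSet.subset ?_
  rintro γ ⟨hγK, hγlim⟩
  obtain ⟨i, hi⟩ := Set.mem_iUnion.mp (ht hγK)
  obtain ⟨hit, hγi⟩ := Set.mem_iUnion.mp hi
  have : γ = i := by
    by_cases h : Order.IsSuccLimit (i : Ordinal)
    · simp only [hU, if_pos h, Set.mem_insert_iff, Set.mem_range] at hγi
      rcases hγi with rfl | ⟨n, rfl⟩
      · rfl
      · exact absurd hγlim (S.notLimit i h n)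
    · simp only [hU, if_neg h, Set.mem_singleton_iff] at hγi
      exact hγi
  rw [this]; exact hit

-- AUX: the shifted ladder tends to its limit point
lemma tendsto_ladder (S : LadderSystem) {α : Om} (hα : Order.IsSuccLimit (α : Ordinal)) (N : ℕ) :
    @Filter.Tendsto ℕ Om (fun k => S.s α (N + k)) Filter.atTop (@nhds Om (ladderTop S) α) := by
  letI := ladderTop S
  rw [tendsto_atTop_nhds]
  intro U hU hUopen
  have hfin : {n | S.s α n ∉ U}.Finite := hUopen α hU hα
  obtain ⟨M, hM⟩ := hfin.bddAbove
  refine ⟨M + 1, fun k _hk => ?_⟩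
  by_contra h
  have := hM (Set.mem_setOf_eq ▸ h : (N + k) ∈ {n | S.s α n ∉ U})
  omega

-- AUX: a point together with a tail of its ladder is compact
lemma compact_cone (S : LadderSystem) {α : Om} (hα : Order.IsSuccLimit (α : Ordinal)) (N : ℕ) :
    @IsCompact Om (ladderTop S) (insert α {γ | ∃ n, N ≤ n ∧ S.s α n = γ}) := by
  letI := ladderTop S
  have hset : {γ : Om | ∃ n, N ≤ n ∧ S.s α n = γ} = Set.range (fun k => S.s α (N + k)) := by
    ext γ
    constructor
    · rintro ⟨n, hn, rfl⟩
      exact ⟨n - N, by simp only []; rw [Nat.add_sub_cancel' hn]⟩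
    · rintro ⟨k, rfl⟩
      exact ⟨N + k, Nat.le_add_right N k, rfl⟩
  rw [hset]
  exact (tendsto_ladder S hα N).isCompact_insert_range

-- AUX: disjointification of ladder tails over a nonstationary set
lemma exists_disjoint_tails (S : LadderSystem) (A : Set Om)
    (hA : ∀ α ∈ A, Order.IsSuccLimit (α : Ordinal))
    (hns : ∃ C : Set Ordinal, IsClubIn C ∧ ∀ α ∈ A, (α : Ordinal) ∉ C) :
    ∃ N : Om → ℕ, ∀ α ∈ A, ∀ β ∈ A, α ≠ β →
      ∀ n m, N α ≤ n → N β ≤ m → S.s α n ≠ S.s β m := by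
  classical
  obtain ⟨C, ⟨hsub, hclosed, hunb⟩, hAC⟩ := hns
  set g : Om → Ordinal := fun α => sSup (C ∩ Set.Iio (α : Ordinal)) with hg
  have hbdd : ∀ α : Om, BddAbove (C ∩ Set.Iio (α : Ordinal)) :=
    fun α => ⟨α, fun x hx => le_of_lt hx.2⟩
  -- g basic facts
  have hcle : ∀ (α : Om) (c : Ordinal), c ∈ C → c < (α : Ordinal) → c ≤ g α := by
    intro α c hc hcα
    simp only [hg]
    exact le_csSup (hbdd α) ⟨hc, hcα⟩
  have hexists : ∀ (α : Om) (x : Ordinal), x < g α → ∃ c ∈ C, c < (α : Ordinal) ∧ x < c := by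
    intro α x hx
    simp only [hg] at hx
    have hne : (C ∩ Set.Iio (α : Ordinal)).Nonempty := by
      by_contra hne
      rw [Set.not_nonempty_iff_eq_empty] at hne
      rw [hne, csSup_empty] at hx
      exact (zero_le : (0 : Ordinal) ≤ x).not_gt hx
    obtain ⟨c, hc, hxc⟩ := exists_lt_of_lt_csSup hne hx
    exact ⟨c, hc.1, hc.2, hxc⟩
  have hgle : ∀ α : Om, g α ≤ (α : Ordinal) := by
    intro α
    rcases Set.eq_empty_or_nonempty (C ∩ Set.Iio (α : Ordinal)) with h | h
    · simp only [hg]; rw [h, csSup_empty]; exact zero_le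
    · simp only [hg]; exact csSup_le h fun x hx => le_of_lt hx.2
  have hglt : ∀ α ∈ A, g α < (α : Ordinal) := by
    intro α hαA
    rcases lt_or_eq_of_le (hgle α) with h | h
    · exact h
    · exfalso
      apply hAC α hαA
      apply hclosed α α.2 (hA α hαA).pos.ne'
      intro p hp
      have hp' : p < g α := by rw [h]; exact hp
      obtain ⟨c, hcC, hcα, hpc⟩ := hexists α p hp'
      exact ⟨c, hcC, hpc, hcα⟩
  -- cross-gap comparison
  have hcross : ∀ α ∈ A, ∀ β ∈ A, g α < g β → (α : Ordinal) ≤ g β := by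
    intro α hαA β hβA hgg
    obtain ⟨c, hcC, hcβ, hgc⟩ := hexists β (g α) hgg
    have hαc : (α : Ordinal) ≤ c := by
      by_contra hlt
      push_neg at hlt
      exact absurd (hcle α c hcC hlt) (not_le.mpr hgc)
    exact hαc.trans (hcle β c hcC hcβ)
  -- same-gap sets are countable
  have hcnt : ∀ δ : Ordinal, {α : Om | α ∈ A ∧ g α = δ}.Countable := by
    intro δ
    rcases Set.eq_empty_or_nonempty {α : Om | α ∈ A ∧ g α = δ} with h | ⟨α₀, hα₀A, hα₀g⟩
    · rw [h]; exact Set.countable_empty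
    · have hδ : δ < omega1 := lt_of_le_of_lt (hα₀g ▸ hgle α₀) α₀.2
      obtain ⟨c, hcC, hδc⟩ := hunb δ hδ
      have hcω : c < omega1 := hsub hcC
      have hsubset : {α : Om | α ∈ A ∧ g α = δ} ⊆ Subtype.val ⁻¹' (Set.Iio c) := by
        rintro α ⟨hαA, hαg⟩
        show (α : Ordinal) < c
        rcases lt_trichotomy (α : Ordinal) c with h | h | h
        · exact h
        · exact absurd (h ▸ hcC) (hAC α hαA)
        · exfalso
          have h2 : c ≤ g α := hcle α c hcC h
          rw [hαg] at h2
          exact (lt_of_le_of_lt h2 hδc).false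
      refine Set.Countable.mono hsubset ?_
      refine Set.Countable.preimage ?_ Subtype.val_injective
      rw [Cardinal.countable_iff_lt_aleph_one, Ordinal.mk_Iio_ordinal]
      have h1 : c.card < Cardinal.aleph 1 := Cardinal.lt_ord.mp hcω
      calc Cardinal.lift.{_} c.card
          < Cardinal.lift.{_} (Cardinal.aleph 1) := Cardinal.lift_lt.mpr h1
        _ = Cardinal.aleph 1 := by rw [Cardinal.lift_aleph, Ordinal.lift_one]
  have hrank : ∀ δ : Ordinal, ∃ f : Om → ℕ, Set.InjOn f {α : Om | α ∈ A ∧ g α = δ} :=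
    fun δ => Set.countable_iff_exists_injOn.mp (hcnt δ)
  choose F hF using hrank
  -- the finitely many same-gap predecessors
  have hEfin : ∀ α : Om, {β : Om | β ∈ A ∧ g β = g α ∧ F (g α) β < F (g α) α}.Finite := by
    intro α
    have himg : (F (g α) '' {β : Om | β ∈ A ∧ g β = g α ∧ F (g α) β < F (g α) α}).Finite := by
      apply (Set.finite_Iio (F (g α) α)).subset
      rintro _ ⟨β, ⟨_, _, hrβ⟩, rfl⟩
      exact hrβ
    refine Set.Finite.of_finite_image himg ?_
    intro x hx y hy hxy
    exact hF (g α) ⟨hx.1, hx.2.1⟩ ⟨hy.1, hy.2.1⟩ hxy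
  -- choose the tails
  have hkey : ∀ α : Om, ∃ Nα : ℕ, α ∈ A → ∀ n, Nα ≤ n →
      (g α < (S.s α n : Ordinal)) ∧
      (∀ β, β ∈ A → g β = g α → F (g α) β < F (g α) α → ∀ m, S.s β m ≠ S.s α n) := by
    intro α
    by_cases hαA : α ∈ A
    · have hlim := hA α hαA
      have hfin1 : {n | (S.s α n : Ordinal) ≤ g α}.Finite := by
        obtain ⟨n₀, hn₀⟩ := S.conv α hlim (g α) (hglt α hαA)
        apply (Set.finite_Iio n₀).subset
        intro n hn
        by_contra h
        have h' : n₀ ≤ n := not_lt.mp (by simpa using h)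
        exact absurd (hn₀.trans_le ((S.strictMono α hlim).monotone h')) (not_lt.mpr hn)
      have hfin2 : (⋃ β ∈ {β : Om | β ∈ A ∧ g β = g α ∧ F (g α) β < F (g α) α},
          {n | ∃ m, S.s β m = S.s α n}).Finite := by
        apply Set.Finite.biUnion (hEfin α)
        intro β hβ
        refine almost_disjoint S hlim (hA β hβ.1) ?_
        intro he
        rw [he] at hβ
        exact lt_irrefl _ hβ.2.2
      obtain ⟨M, hM⟩ := (hfin1.union hfin2).bddAbove
      refine ⟨M + 1, fun _ n hn => ?_⟩
      have hnotin : n ∉ {n | (S.s α n : Ordinal) ≤ g α} ∪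
          (⋃ β ∈ {β : Om | β ∈ A ∧ g β = g α ∧ F (g α) β < F (g α) α},
            {n | ∃ m, S.s β m = S.s α n}) := by
        intro h
        have := hM h
        omega
      rw [Set.mem_union] at hnotin
      push_neg at hnotin
      constructor
      · have := hnotin.1
        simpa using not_le.mp this
      · intro β hβA hgβ hFβ m hm
        exact hnotin.2 (Set.mem_biUnion ⟨hβA, hgβ, hFβ⟩ ⟨m, hm⟩)
    · exact ⟨0, fun h => absurd h hαA⟩
  choose N hN using hkey
  refine ⟨N, ?_⟩
  intro α hαA β hβA hne n m hn hm heq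
  have heqo : (S.s α n : Ordinal) = (S.s β m : Ordinal) := by rw [heq]
  rcases lt_trichotomy (g α) (g β) with hgg | hgg | hgg
  · have h1 : (α : Ordinal) ≤ g β := hcross α hαA β hβA hgg
    have h2 : g β < (S.s β m : Ordinal) := (hN β hβA m hm).1
    have h3 : (S.s α n : Ordinal) < (α : Ordinal) := S.lt_self α (hA α hαA) n
    rw [heqo] at h3
    exact absurd (h3.trans_le h1) (not_lt.mpr h2.le)
  · -- same gap : compare ranks
    rcases lt_trichotomy (F (g α) α) (F (g α) β) with hr | hr | hr
    · have hr' : F (g β) α < F (g β) β := by rw [← hgg]; exact hr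
      exact (hN β hβA m hm).2 α hαA hgg hr' n heq
    · have : α = β := hF (g α) ⟨hαA, rfl⟩ ⟨hβA, hgg.symm⟩ hr
      exact hne this
    · exact (hN α hαA n hn).2 β hβA hgg.symm hr m heq.symm
  · have h1 : (β : Ordinal) ≤ g α := hcross β hβA α hαA hgg
    have h2 : g α < (S.s α n : Ordinal) := (hN α hαA n hn).1
    have h3 : (S.s β m : Ordinal) < (β : Ordinal) := S.lt_self β (hA β hβA) m
    rw [← heqo] at h3
    exact absurd (h3.trans_le h1) (not_lt.mpr h2.le)

lemma ladder_isOpen_iff (S : LadderSystem) (U : Set Om) :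
    @IsOpen Om (ladderTop S) U ↔
      ∀ α ∈ U, Order.IsSuccLimit (α : Ordinal) → {n | S.s α n ∉ U}.Finite :=
  Iff.rfl

/-- Every injection `ξ` of a nonstationary set `A` of limit ordinals into the limit
ordinals extends to a continuous self-map of `K_S` sending `∞` and every limit ordinal
outside `A` to `∞`. -/
theorem stmt15 (S : LadderSystem) (A : Set Om) (hA : ∀ α ∈ A, Order.IsSuccLimit (α : Ordinal))
    (hns : ∃ C : Set Ordinal, IsClubIn C ∧ ∀ α ∈ A, (α : Ordinal) ∉ C)
    (ξ : Om → Om) (hξinj : Set.InjOn ξ A) (hξL : ∀ α ∈ A, Order.IsSuccLimit ((ξ α : Om) : Ordinal)) :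
    ∃ φ : OnePoint Om → OnePoint Om,
      Continuous[ksTop S, ksTop S] φ ∧ φ ∞ = ∞ ∧
      (∀ α ∈ A, φ ↑α = ↑(ξ α)) ∧
      (∀ α : Om, Order.IsSuccLimit (α : Ordinal) → α ∉ A → φ ↑α = ∞) := by
  classical
  letI : TopologicalSpace Om := ladderTop S
  obtain ⟨N, hdisj⟩ := exists_disjoint_tails S A hA hns
  set T : Om → Set Om := fun α => {γ | ∃ n, N α ≤ n ∧ S.s α n = γ} with hT
  have hTnotlim : ∀ α ∈ A, ∀ γ ∈ T α, ¬ Order.IsSuccLimit (γ : Ordinal) := by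
    rintro α hαA γ ⟨n, _, rfl⟩
    exact S.notLimit α (hA α hαA) n
  have hTdisj : ∀ α ∈ A, ∀ β ∈ A, α ≠ β → ∀ γ, γ ∈ T α → γ ∉ T β := by
    rintro α hαA β hβA hne γ ⟨n, hn, rfl⟩ ⟨m, hm, hEq⟩
    exact hdisj α hαA β hβA hne n m hn hm hEq.symm
  set φ₀ : Om → OnePoint Om := fun γ =>
    if γ ∈ A then (↑(ξ γ) : OnePoint Om)
    else if h : ∃ α, α ∈ A ∧ γ ∈ T α then (↑(ξ h.choose) : OnePoint Om) else ∞ with hφ₀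
  have hval_A : ∀ γ ∈ A, φ₀ γ = ↑(ξ γ) := fun γ h => by simp only [hφ₀, if_pos h]
  have hval_T : ∀ α ∈ A, ∀ γ ∈ T α, φ₀ γ = ↑(ξ α) := by
    intro α hαA γ hγ
    have hγA : γ ∉ A := fun hγA => hTnotlim α hαA γ hγ (hA γ hγA)
    have hex : ∃ α, α ∈ A ∧ γ ∈ T α := ⟨α, hαA, hγ⟩
    have hchoose : hex.choose = α := by
      by_contra hnec
      exact hTdisj hex.choose hex.choose_spec.1 α hαA hnec γ hex.choose_spec.2 hγ
    simp only [hφ₀, if_neg hγA, dif_pos hex, hchoose]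
  have hval_none : ∀ γ : Om, γ ∉ A → (∀ α ∈ A, γ ∉ T α) → φ₀ γ = ∞ := by
    intro γ h1 h2
    have hex : ¬ ∃ α, α ∈ A ∧ γ ∈ T α := by
      rintro ⟨α, hα, hγ⟩
      exact h2 α hα hγ
    simp only [hφ₀, if_neg h1, dif_neg hex]
  have hval_lim : ∀ γ : Om, Order.IsSuccLimit (γ : Ordinal) → γ ∉ A → φ₀ γ = ∞ :=
    fun γ hlim h1 => hval_none γ h1 (fun α hα hγ => hTnotlim α hα γ hγ hlim)
  have hmemT : ∀ (α : Om) (n : ℕ), N α ≤ n → S.s α n ∈ T α := fun α n hn => ⟨n, hn, rfl⟩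
  refine ⟨fun x => Option.elim x ∞ φ₀, ?_, rfl, fun α hα => hval_A α hα,
    fun α hlim hα => hval_lim α hlim hα⟩
  -- continuity
  have hcont : Continuous (fun x : OnePoint Om => Option.elim x ∞ φ₀) := by
    rw [continuous_def]
    intro V hV
    rw [OnePoint.isOpen_def] at hV ⊢
    have hpre : ((↑) ⁻¹' ((fun x : OnePoint Om => Option.elim x ∞ φ₀) ⁻¹' V) : Set Om)
        = φ₀ ⁻¹' V := rfl
    set G : Set Om := {α | α ∈ A ∧ ξ α ∈ (((↑) ⁻¹' V : Set Om))ᶜ} with hG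
    have hGfin : ∞ ∈ V → G.Finite := by
      intro hinf
      have hK : IsCompact ((((↑) ⁻¹' V : Set Om))ᶜ) := hV.1 hinf
      have hLfin := compact_limits S hK
      have himg : (ξ '' G).Finite := by
        apply hLfin.subset
        rintro _ ⟨α, ⟨hαA, hαc⟩, rfl⟩
        exact ⟨hαc, hξL α hαA⟩
      exact Set.Finite.of_finite_image himg (hξinj.mono (fun x hx => hx.1))
    constructor
    · -- compactness of the complement
      intro hinf'
      have hinf : ∞ ∈ V := hinf'
      rw [hpre]
      have hUc : (φ₀ ⁻¹' V)ᶜ = ⋃ α ∈ G, insert α (T α) := by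
        ext γ
        simp only [Set.mem_compl_iff, Set.mem_preimage, Set.mem_iUnion]
        constructor
        · intro hγ
          by_cases hγA : γ ∈ A
          · refine ⟨γ, ⟨hγA, ?_⟩, Set.mem_insert _ _⟩
            intro hmem
            exact hγ (by rw [hval_A γ hγA]; exact hmem)
          · by_cases hex : ∃ α, α ∈ A ∧ γ ∈ T α
            · obtain ⟨α, hαA, hγT⟩ := hex
              refine ⟨α, ⟨hαA, ?_⟩, Set.mem_insert_of_mem _ hγT⟩
              intro hmem
              exact hγ (by rw [hval_T α hαA γ hγT]; exact hmem)
            · exact absurd (by rw [hval_none γ hγA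
                (fun α hα hγT => hex ⟨α, hα, hγT⟩)]; exact hinf) hγ
        · rintro ⟨α, ⟨hαA, hαc⟩, hγ⟩
          rcases hγ with rfl | hγT
          · rw [hval_A γ hαA]
            exact hαc
          · rw [hval_T α hαA γ hγT]
            exact hαc
      rw [hUc]
      apply (hGfin hinf).isCompact_biUnion
      intro α hα
      have := compact_cone S (hA α hα.1) (N α)
      simpa only [hT] using this
    · -- openness of the preimage
      rw [hpre, ladder_isOpen_iff]
      intro lam hlam hlim
      by_cases hlamA : lam ∈ A
      · have hv : (↑(ξ lam) : OnePoint Om) ∈ V := by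
          rw [← hval_A lam hlamA]
          exact hlam
        apply (Set.finite_Iio (N lam)).subset
        intro n hn
        by_contra h
        have h' : N lam ≤ n := not_lt.mp (by simpa using h)
        apply hn
        show φ₀ (S.s lam n) ∈ V
        rw [hval_T lam hlamA _ (hmemT lam n h')]
        exact hv
      · have hinf : ∞ ∈ V := by
          rw [← hval_lim lam hlim hlamA]
          exact hlam
        apply ((hGfin hinf).biUnion
          (fun α (hα : α ∈ G) => almost_disjoint S hlim (hA α hα.1)
            (fun he => hlamA (he ▸ hα.1)))).subset
        intro n hn
        have hγA : S.s lam n ∉ A := fun hc => S.notLimit lam hlim n (hA _ hc)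
        by_cases hex : ∃ α, α ∈ A ∧ S.s lam n ∈ T α
        · obtain ⟨α, hαA, hγT⟩ := hex
          have hval := hval_T α hαA _ hγT
          have hαG : α ∈ G := by
            refine ⟨hαA, ?_⟩
            intro hmem
            exact hn (by show φ₀ (S.s lam n) ∈ V; rw [hval]; exact hmem)
          obtain ⟨m, _, hm⟩ := hγT
          exact Set.mem_biUnion hαG ⟨m, hm⟩
        · refine absurd ?_ hn
          show φ₀ (S.s lam n) ∈ V
          rw [hval_none _ hγA (fun α hα hγT => hex ⟨α, hα, hγT⟩)]
          exact hinf
  exact hcont
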